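/- Let p be prime, n = p + i with 1 ≤ i ≤ p − 1, and 1 ≤ j ≤ i. Then the symmetric polynomial e_je_p − e_{p+j} in n variables lies in the image of the transfer map Tr: ℤ_(p)[x_1,…,x_n] → ℤ_(p)[x_1,…,x_n]^{S_n}. In particular, the coefficient of the monomial symmetric polynomial m_{(1^{p+j})} in e_je_p − e_{p+j} is C(p+j, j) − 1, and (C(p+j,j) − 1)/((p+j)!(i−j)!) lies in ℤ_(p). -/

import Mathlib

open MvPolynomial

/-- The prime ideal `(p)` of `ℤ`. -/
abbrev pIdeal (p : ℕ) : Ideal ℤ := Ideal.span {(p : ℤ)}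

instance pIdeal_isPrime (p : ℕ) [hp : Fact p.Prime] : (pIdeal p).IsPrime :=
  (Ideal.span_singleton_prime (by exact_mod_cast hp.out.ne_zero)).mpr
    (Nat.prime_iff_prime_int.mp hp.out)

/-- `ℤ_(p)`, the localization of `ℤ` at the prime `p`. -/
abbrev Zp (p : ℕ) [Fact p.Prime] : Type := Localization.AtPrime (pIdeal p)

set_option linter.unusedSectionVars false
set_option maxHeartbeats 1000000


open Finset Pointwise

section Generic
variable {G X M : Type*} [Group G] [Fintype G] [DecidableEq X] [MulAction G X]
  [AddCommMonoid M]

/-- orbit of x as a Finset -/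
def orbF (G : Type*) {X : Type*} [Group G] [Fintype G] [DecidableEq X] [MulAction G X]
    (x : X) : Finset X :=
  (Finset.univ : Finset G).image (· • x)

lemma mem_orbF {x y : X} : y ∈ orbF G x ↔ ∃ g : G, g • x = y := by
  simp [orbF]

lemma self_mem_orbF (x : X) : x ∈ orbF G x := mem_orbF.mpr ⟨1, one_smul _ _⟩

lemma orbF_smul (g : G) (x : X) : orbF G (g • x) = orbF G x := by
  ext y
  simp only [mem_orbF]
  constructor
  · rintro ⟨h, rfl⟩; exact ⟨h * g, (mul_smul _ _ _)⟩
  · rintro ⟨h, rfl⟩; exact ⟨h * g⁻¹, by rw [mul_smul, inv_smul_smul]⟩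

lemma orbF_eq_of_mem {x y : X} (h : y ∈ orbF G x) : orbF G y = orbF G x := by
  obtain ⟨g, rfl⟩ := mem_orbF.mp h
  exact orbF_smul g x

lemma sum_smul_eq_card_stab_smul (x : X) (F : X → M) :
    ∑ g : G, F (g • x) =
      (Finset.univ.filter (fun g : G => g • x = x)).card • ∑ y ∈ orbF G x, F y := by
  classical
  rw [← Finset.sum_fiberwise_of_maps_to (g := fun g : G => g • x) (t := orbF G x)
    (fun g _ => mem_orbF.mpr ⟨g, rfl⟩)]
  rw [Finset.smul_sum]
  refine Finset.sum_congr rfl fun y hy => ?_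
  obtain ⟨g₀, rfl⟩ := mem_orbF.mp hy
  have hcard : (Finset.univ.filter (fun g : G => g • x = g₀ • x)).card
      = (Finset.univ.filter (fun g : G => g • x = x)).card := by
    apply Finset.card_bij (fun g _ => g₀⁻¹ * g)
    · intro g hg
      simp only [mem_filter, mem_univ, true_and] at hg ⊢
      rw [mul_smul, hg, inv_smul_smul]
    · intro a ha b hb hab
      exact mul_left_cancel hab
    · intro b hb
      simp only [mem_filter, mem_univ, true_and] at hb ⊢
      exact ⟨g₀ * b, by rw [mul_smul, hb], by rw [inv_mul_cancel_left]⟩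
  calc ∑ i ∈ Finset.univ.filter (fun i : G => i • x = g₀ • x), F (i • x)
      = ∑ i ∈ Finset.univ.filter (fun i : G => i • x = g₀ • x), F (g₀ • x) :=
        Finset.sum_congr rfl (fun g hg => by rw [(Finset.mem_filter.mp hg).2])
    _ = _ := by rw [Finset.sum_const, hcard]

lemma card_stab_eq (x : X) :
    Nat.card (MulAction.stabilizer G x) =
      (Finset.univ.filter (fun g : G => g • x = x)).card := by
  classical
  rw [Nat.card_congr (Equiv.subtypeEquivRight (fun g => MulAction.mem_stabilizer_iff))]
  rw [Nat.card_eq_fintype_card, Fintype.card_subtype]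

lemma orbit_decomp [Fintype X] (P : Finset X) (hP : ∀ (g : G), ∀ x ∈ P, g • x ∈ P)
    (F : X → M) :
    ∃ Q : Finset X, Q ⊆ P ∧
      ∑ x ∈ P, F x = ∑ z ∈ Q, ∑ y ∈ orbF G z, F y := by
  classical
  letI : LinearOrder X := LinearOrder.lift' (Fintype.equivFin X) (Equiv.injective _)
  set r : X → X := fun x => (orbF G x).min' ⟨x, self_mem_orbF x⟩ with hr
  have hrmem : ∀ x : X, r x ∈ orbF G x := fun x => Finset.min'_mem _ _
  have hrc : ∀ x y : X, y ∈ orbF G x → r y = r x := by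
    intro x y hy
    simp only [hr, orbF_eq_of_mem hy]
  refine ⟨P.image r, ?_, ?_⟩
  · intro z hz
    obtain ⟨x, hx, rfl⟩ := Finset.mem_image.mp hz
    obtain ⟨g, hg⟩ := mem_orbF.mp (hrmem x)
    exact hg ▸ hP g x hx
  · rw [← Finset.sum_fiberwise_of_maps_to (g := r) (fun x hx => Finset.mem_image_of_mem r hx)]
    refine Finset.sum_congr rfl fun z hz => ?_
    obtain ⟨x₀, hx₀, rfl⟩ := Finset.mem_image.mp hz
    apply Finset.sum_congr _ (fun _ _ => rfl)
    have horb : orbF G (r x₀) = orbF G x₀ := orbF_eq_of_mem (hrmem x₀)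
    ext y
    simp only [Finset.mem_filter, horb]
    constructor
    · rintro ⟨hyP, hy⟩
      rw [← horb, ← hy, orbF_eq_of_mem (hrmem y)]
      exact self_mem_orbF y
    · intro hy
      have h1 : r y = r x₀ := hrc x₀ y hy
      obtain ⟨g, rfl⟩ := mem_orbF.mp hy
      exact ⟨hP g x₀ hx₀, h1⟩

end Generic


open Finset Pointwise MvPolynomial

section Poly
variable {ι R : Type*} [Fintype ι] [DecidableEq ι] [CommRing R]

/-- squarefree monomial attached to a finset -/
noncomputable def mS (R : Type*) [CommRing R] {ι : Type*} (S : Finset ι) : MvPolynomial ι R := ∏ a ∈ S, X a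

lemma rename_mS (σ : Equiv.Perm ι) (S : Finset ι) :
    rename (⇑σ) (mS R S) = mS R (σ • S) := by
  rw [mS, map_prod]
  rw [show (σ • S) = S.image ⇑σ from rfl, mS]
  rw [Finset.prod_image (fun a _ b _ h => σ.injective h)]
  simp [rename_X]

lemma rename_m2 (σ : Equiv.Perm ι) (x : Finset ι × Finset ι) :
    rename (⇑σ) (mS R x.1 * mS R x.2) = mS R (σ • x).1 * mS R (σ • x).2 := by
  rw [map_mul, rename_mS, rename_mS]
  rfl

lemma esymm_eq_sum_mS (k : ℕ) : esymm ι R k = ∑ S ∈ powersetCard k univ, mS R S := rfl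

end Poly

section Comb
open Finset Pointwise MvPolynomial

variable {ι : Type*} [DecidableEq ι]

/-- 0/1 indicator finsupp of a finset -/
noncomputable def indSum (A : Finset ι) : ι →₀ ℕ := ∑ a ∈ A, Finsupp.single a 1

lemma indSum_apply (A : Finset ι) (t : ι) : indSum A t = if t ∈ A then 1 else 0 := by
  rw [indSum, Finsupp.finset_sum_apply]
  simp only [Finsupp.single_apply]
  exact Finset.sum_ite_eq' A t (fun _ => 1)

lemma indSum_injective : Function.Injective (indSum (ι := ι)) := by
  intro A B h
  ext t
  have := congrArg (fun f : ι →₀ ℕ => f t) h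
  simp only [indSum_apply] at this
  by_cases ht : t ∈ A <;> by_cases ht' : t ∈ B <;> simp_all

lemma mS_eq_monomial (R : Type*) [CommRing R] (S : Finset ι) :
    mS R S = monomial (indSum S) 1 := by
  rw [indSum, monomial_sum_one]
  rfl

lemma coeff_indSum_mS (R : Type*) [CommRing R] (S T : Finset ι) :
    coeff (indSum T) (mS R S) = if S = T then 1 else 0 := by
  rw [mS_eq_monomial, coeff_monomial]
  by_cases h : S = T
  · simp [h]
  · rw [if_neg h, if_neg (fun hc => h (indSum_injective hc))]

lemma coeff_indSum_mul_eq_zero (R : Type*) [CommRing R] {A B : Finset ι} (T : Finset ι)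
    (hAB : (A ∩ B).Nonempty) :
    coeff (indSum T) (mS R A * mS R B) = 0 := by
  rw [mS_eq_monomial, mS_eq_monomial, monomial_mul, mul_one, coeff_monomial]
  rw [if_neg]
  intro hc
  obtain ⟨a, ha⟩ := hAB
  rw [Finset.mem_inter] at ha
  have := congrArg (fun f : ι →₀ ℕ => f a) hc
  simp only [Finsupp.add_apply, indSum_apply, if_pos ha.1, if_pos ha.2] at this
  split at this <;> omega

lemma card_filter_lt (p i j : ℕ) (h : j ≤ i) :
    (Finset.univ.filter (fun t : Fin (p + i) => (t : ℕ) < p + j)).card = p + j := by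
  have hle : p + j ≤ p + i := by omega
  have heq : (Finset.univ.filter (fun t : Fin (p + i) => (t : ℕ) < p + j))
      = (Finset.univ : Finset (Fin (p + j))).image (Fin.castLE hle) := by
    ext t
    simp only [Finset.mem_filter, Finset.mem_univ, true_and, Finset.mem_image]
    constructor
    · intro ht
      exact ⟨⟨(t : ℕ), ht⟩, rfl⟩
    · rintro ⟨s, -, rfl⟩
      exact s.isLt
  rw [heq, Finset.card_image_of_injective _ (Fin.castLE_injective hle), Finset.card_univ,
    Fintype.card_fin]

lemma sum_disjoint_pairs (R : Type*) [CommRing R] [Fintype ι] (j k : ℕ) :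
    ∑ x ∈ ((Finset.powersetCard j (Finset.univ : Finset ι) ×ˢ
          Finset.powersetCard k Finset.univ).filter
        (fun x : Finset ι × Finset ι => ¬(x.1 ∩ x.2).Nonempty)),
        mS R x.1 * mS R x.2
      = (j + k).choose j •
        ∑ S ∈ Finset.powersetCard (j + k) (Finset.univ : Finset ι), mS R S := by
  classical
  set P₀ := ((Finset.powersetCard j (Finset.univ : Finset ι) ×ˢ
      Finset.powersetCard k Finset.univ).filter
    (fun x : Finset ι × Finset ι => ¬(x.1 ∩ x.2).Nonempty)) with hP₀
  have hmem : ∀ x ∈ P₀, x.1.card = j ∧ x.2.card = k ∧ Disjoint x.1 x.2 := by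
    intro x hx
    rw [hP₀, Finset.mem_filter, Finset.mem_product, Finset.mem_powersetCard_univ,
      Finset.mem_powersetCard_univ] at hx
    exact ⟨hx.1.1, hx.1.2, Finset.disjoint_iff_inter_eq_empty.mpr
      (Finset.not_nonempty_iff_eq_empty.mp hx.2)⟩
  have hmap : ∀ x ∈ P₀, x.1 ∪ x.2 ∈ Finset.powersetCard (j + k) (Finset.univ : Finset ι) := by
    intro x hx
    obtain ⟨h1, h2, h3⟩ := hmem x hx
    rw [Finset.mem_powersetCard_univ, Finset.card_union_of_disjoint h3, h1, h2]
  rw [eq_comm, Finset.smul_sum, ← Finset.sum_fiberwise_of_maps_to hmap]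
  refine Finset.sum_congr rfl fun S hS => ?_
  rw [Finset.mem_powersetCard_univ] at hS
  have hfib : ∀ x ∈ P₀.filter (fun x => x.1 ∪ x.2 = S), mS R x.1 * mS R x.2 = mS R S := by
    intro x hx
    rw [Finset.mem_filter] at hx
    obtain ⟨h1, h2, h3⟩ := hmem x hx.1
    rw [mS, mS, mS, ← Finset.prod_union h3, hx.2]
  rw [Finset.sum_congr rfl hfib, Finset.sum_const]
  congr 1
  have hcard : (P₀.filter (fun x => x.1 ∪ x.2 = S)).card
      = (Finset.powersetCard j S).card := by
    apply Finset.card_bij (fun x _ => x.1)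
    · intro x hx
      rw [Finset.mem_filter] at hx
      obtain ⟨h1, h2, h3⟩ := hmem x hx.1
      rw [Finset.mem_powersetCard]
      exact ⟨hx.2 ▸ Finset.subset_union_left, h1⟩
    · intro a ha b hb hab
      rw [Finset.mem_filter] at ha hb
      obtain ⟨ha1, ha2, ha3⟩ := hmem a ha.1
      obtain ⟨hb1, hb2, hb3⟩ := hmem b hb.1
      have h2 : a.2 = b.2 := by
        rw [← Finset.union_sdiff_cancel_left ha3, ← Finset.union_sdiff_cancel_left hb3,
          ha.2, hb.2, hab]
      exact Prod.ext hab h2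
    · intro A hA
      rw [Finset.mem_powersetCard] at hA
      refine ⟨(A, S \ A), ?_, rfl⟩
      rw [Finset.mem_filter, hP₀, Finset.mem_filter, Finset.mem_product,
        Finset.mem_powersetCard_univ, Finset.mem_powersetCard_univ]
      refine ⟨⟨⟨hA.2, ?_⟩, ?_⟩, Finset.union_sdiff_of_subset hA.1⟩
      · rw [Finset.card_sdiff_of_subset hA.1, hS, hA.2]
        omega
      · rw [Finset.not_nonempty_iff_eq_empty, ← Finset.disjoint_iff_inter_eq_empty]
        exact Finset.disjoint_sdiff
  rw [hcard, Finset.card_powersetCard, hS]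

end Comb

section Cycle
open Finset Pointwise

variable {ι : Type*} [Fintype ι] [DecidableEq ι]

lemma zpow_mem_of_image_eq {σ : Equiv.Perm ι} {C : Finset ι} (hC : C.image ⇑σ = C) :
    ∀ (k : ℤ), ∀ a ∈ C, (σ ^ k) a ∈ C := by
  have h1 : ∀ a ∈ C, σ a ∈ C := fun a ha => hC ▸ Finset.mem_image_of_mem _ ha
  have h2 : ∀ a ∈ C, σ⁻¹ a ∈ C := by
    intro a ha
    conv at ha => rw [← hC]
    obtain ⟨b, hb, rfl⟩ := Finset.mem_image.mp ha
    rwa [← Equiv.Perm.mul_apply, inv_mul_cancel, Equiv.Perm.one_apply]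
  intro k
  induction k using Int.induction_on with
  | zero => simp
  | succ n ih =>
    intro a ha
    rw [zpow_add_one, Equiv.Perm.mul_apply]
    exact ih _ (h1 a ha)
  | pred n ih =>
    intro a ha
    rw [zpow_sub_one, Equiv.Perm.mul_apply]
    exact ih _ (h2 a ha)

lemma support_subset_of_invariant {σ : Equiv.Perm ι} (hσ : σ.IsCycle) {C : Finset ι}
    (hC : C.image ⇑σ = C) (hne : (C ∩ σ.support).Nonempty) : σ.support ⊆ C := by
  obtain ⟨a, ha⟩ := hne
  rw [Finset.mem_inter] at ha
  intro s hs
  obtain ⟨x, hx, hall⟩ := hσ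
  have h1 : σ.SameCycle a s :=
    ((hall (Equiv.Perm.mem_support.mp ha.2)).symm.trans (hall (Equiv.Perm.mem_support.mp hs)))
  obtain ⟨k, hk⟩ := h1
  exact hk ▸ zpow_mem_of_image_eq hC k a ha.1

lemma not_dvd_stab_pair (p i j : ℕ) [hp : Fact p.Prime] (hip : i < p) (hjp : j < p)
    {A B : Finset (Fin (p + i))} (hA : A.card = j) (hB : B.card = p)
    (hAB : (A ∩ B).Nonempty) :
    ¬ p ∣ (Finset.univ.filter
      (fun σ : Equiv.Perm (Fin (p + i)) => σ • (A, B) = (A, B))).card := by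
  classical
  intro hdvd
  rw [← card_stab_eq] at hdvd
  haveI : Fintype ↥(MulAction.stabilizer (Equiv.Perm (Fin (p + i))) (A, B)) :=
    Fintype.ofFinite _
  rw [Nat.card_eq_fintype_card] at hdvd
  obtain ⟨g, hg⟩ := exists_prime_orderOf_dvd_card p hdvd
  set σ : Equiv.Perm (Fin (p + i)) := (g : Equiv.Perm (Fin (p + i))) with hσdef
  have hord : orderOf σ = p := by rw [Subgroup.orderOf_coe]; exact hg
  have hcyc : σ.IsCycle := by
    apply Equiv.Perm.isCycle_of_prime_order' (by rw [hord]; exact hp.out)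
    rw [hord, Fintype.card_fin]
    omega
  have hsupp : σ.support.card = p := (hcyc.orderOf).symm.trans hord
  have hgmem : σ • (A, B) = (A, B) := g.2
  have hA' : A.image ⇑σ = A := by
    have := congrArg Prod.fst hgmem
    exact this
  have hB' : B.image ⇑σ = B := by
    have := congrArg Prod.snd hgmem
    exact this
  have hAS : A ∩ σ.support = ∅ := by
    by_contra hcon
    have hne : (A ∩ σ.support).Nonempty := Finset.nonempty_iff_ne_empty.mpr hcon
    have hsub := support_subset_of_invariant hcyc hA' hne
    have := Finset.card_le_card hsub
    omega
  by_cases hBS : (B ∩ σ.support).Nonempty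
  · have hsub := support_subset_of_invariant hcyc hB' hBS
    have hBeq : σ.support = B := Finset.eq_of_subset_of_card_le hsub (by omega)
    obtain ⟨a, ha⟩ := hAB
    rw [Finset.mem_inter] at ha
    have : a ∈ A ∩ σ.support := Finset.mem_inter.mpr ⟨ha.1, hBeq ▸ ha.2⟩
    rw [hAS] at this
    exact absurd this (Finset.notMem_empty a)
  · have hBS' : B ∩ σ.support = ∅ := Finset.not_nonempty_iff_eq_empty.mp hBS
    have hdisj : Disjoint (A ∪ B) σ.support := by
      rw [Finset.disjoint_iff_inter_eq_empty, Finset.union_inter_distrib_right, hAS, hBS']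
      simp
    have h1 : (A ∪ B).card + σ.support.card = ((A ∪ B) ∪ σ.support).card :=
      (Finset.card_union_of_disjoint hdisj).symm
    have h2 : ((A ∪ B) ∪ σ.support).card ≤ p + i := by
      have := Finset.card_le_univ ((A ∪ B) ∪ σ.support)
      rwa [Fintype.card_fin] at this
    have h3 : B.card ≤ (A ∪ B).card := Finset.card_le_card Finset.subset_union_right
    omega

end Cycle

section Tr
open Finset Pointwise MvPolynomial

lemma tr_sum {ι : Type*} [Fintype ι] [DecidableEq ι] {R : Type*} [CommRing R]
    {X : Type*} [Fintype X] [DecidableEq X] [MulAction (Equiv.Perm ι) X]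
    (s : Finset X) (c : X → R) (md : X → MvPolynomial ι R)
    (hcompat : ∀ (σ : Equiv.Perm ι) (x : X), rename (⇑σ) (md x) = md (σ • x)) :
    ∑ σ : Equiv.Perm ι, rename (⇑σ) (∑ x ∈ s, c x • md x)
      = ∑ x ∈ s,
          (c x * (((Finset.univ.filter (fun σ : Equiv.Perm ι => σ • x = x)).card : ℕ) : R))
            • ∑ y ∈ orbF (Equiv.Perm ι) x, md y := by
  have h1 : ∀ σ : Equiv.Perm ι, rename (⇑σ) (∑ x ∈ s, c x • md x)
      = ∑ x ∈ s, c x • md (σ • x) := by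
    intro σ
    rw [map_sum]
    refine Finset.sum_congr rfl fun x _ => ?_
    rw [smul_eq_C_mul, map_mul, rename_C, ← smul_eq_C_mul, hcompat]
  rw [Finset.sum_congr rfl (fun σ _ => h1 σ), Finset.sum_comm]
  refine Finset.sum_congr rfl fun x _ => ?_
  rw [← Finset.smul_sum, sum_smul_eq_card_stab_smul x md,
    ← Nat.cast_smul_eq_nsmul R, smul_smul]

end Tr


open Finset


section Arith
variable (p : ℕ) [hp : Fact p.Prime]

lemma not_sq_dvd_factorial {m : ℕ} (hm : m < 2 * p) : ¬ p ^ 2 ∣ m.factorial := by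
  induction m with
  | zero =>
    intro h
    have := Nat.le_of_dvd one_pos h
    have h2 := hp.out.two_le
    nlinarith
  | succ m ih =>
    intro h
    rw [Nat.factorial_succ] at h
    by_cases hpd : p ∣ m + 1
    · obtain ⟨k, hk⟩ := hpd
      have hk1 : k = 1 := by
        have h2 := hp.out.two_le
        have hk0 : k ≠ 0 := by rintro rfl; omega
        have hklt : p * k < p * 2 := by rw [← hk]; omega
        have hk2 : k < 2 := lt_of_mul_lt_mul_left hklt (Nat.zero_le p)
        omega
      subst hk1
      rw [mul_one] at hk
      rw [hk, pow_two] at h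
      have hpm : p ∣ m.factorial :=
        (mul_dvd_mul_iff_left (a := p) hp.out.pos.ne').mp h
      rw [Nat.Prime.dvd_factorial hp.out] at hpm
      omega
    · have hcop : Nat.Coprime (p ^ 2) (m + 1) :=
        Nat.Coprime.pow_left 2 ((Nat.Prime.coprime_iff_not_dvd hp.out).mpr hpd)
      exact ih (by omega) (hcop.dvd_of_dvd_mul_left h)

lemma isUnit_natCast_Zp {m : ℕ} (hm : ¬ p ∣ m) : IsUnit (m : Zp p) := by
  have h1 : (m : ℤ) ∈ (pIdeal p).primeCompl := by
    intro hmem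
    rw [SetLike.mem_coe, Ideal.mem_span_singleton] at hmem
    exact hm (by exact_mod_cast hmem)
  have h2 := IsLocalization.map_units (Zp p) (⟨(m : ℤ), h1⟩ : (pIdeal p).primeCompl)
  rwa [show algebraMap ℤ (Zp p) (m : ℤ) = (m : Zp p) from map_natCast _ m] at h2

lemma dvd_cast_Zp {d : ℕ} (hd0 : d ≠ 0) (hdsq : ¬ p ^ 2 ∣ d) {z : ℤ}
    (hz : (p : ℤ) ∣ z) : (d : Zp p) ∣ (z : Zp p) := by
  set a := d.factorization p with ha
  have ha1 : a ≤ 1 := by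
    by_contra hcon
    push_neg at hcon
    exact hdsq ((Nat.Prime.pow_dvd_iff_le_factorization hp.out hd0).mpr hcon)
  obtain ⟨m, hm⟩ : p ^ a ∣ d := Nat.ordProj_dvd d p
  have hpm : ¬ p ∣ m := by
    intro hcon
    obtain ⟨k, hk⟩ := hcon
    have : p ^ (a + 1) ∣ d := ⟨k, by rw [hm, hk]; ring⟩
    have h2 := (Nat.Prime.pow_dvd_iff_le_factorization hp.out hd0).mp this
    rw [← ha] at h2
    omega
  obtain ⟨t, ht⟩ := hz
  have hu := isUnit_natCast_Zp p hpm
  refine ⟨Ring.inverse (m : Zp p) * (p : Zp p) ^ (1 - a) * (t : Zp p), ?_⟩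
  have hd : (d : Zp p) = (p : Zp p) ^ a * (m : Zp p) := by
    rw [hm]; push_cast; ring
  have hz' : (z : Zp p) = (p : Zp p) * (t : Zp p) := by
    rw [ht]; push_cast; ring
  rw [hz', hd]
  have hmu : (m : Zp p) * Ring.inverse (m : Zp p) = 1 := Ring.mul_inverse_cancel _ hu
  have hexp : a + (1 - a) = 1 := by omega
  calc (p : Zp p) * (t : Zp p)
      = (p : Zp p) ^ a * (p : Zp p) ^ (1 - a) * (t : Zp p) := by
        rw [← pow_add, hexp, pow_one]
    _ = (p : Zp p) ^ a * ((m : Zp p) * Ring.inverse (m : Zp p)) * (p : Zp p) ^ (1 - a)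
          * (t : Zp p) := by rw [hmu]; ring
    _ = _ := by ring

lemma choose_modeq (j : ℕ) (hj : j < p) : (p + j).choose j ≡ 1 [MOD p] := by
  induction j with
  | zero => simp [Nat.ModEq.refl]
  | succ j ih =>
    have h1 : (p + (j+1)).choose (j+1) = (p + j).choose j + (p + j).choose (j + 1) := by
      rw [show p + (j+1) = (p + j) + 1 from rfl, Nat.choose_succ_succ]
    have h2 : p ∣ (p + j).choose (j + 1) := by
      apply Nat.Prime.dvd_choose hp.out (by omega) (by omega) (by omega)
    calc (p + (j+1)).choose (j+1) = (p + j).choose j + (p + j).choose (j + 1) := h1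
      _ ≡ 1 + 0 [MOD p] := Nat.ModEq.add (ih (by omega)) (Nat.modEq_zero_iff_dvd.mpr h2)
      _ = 1 := by ring

lemma p_dvd_choose_sub_one (j : ℕ) (hj : j < p) : (p : ℤ) ∣ ((p + j).choose j : ℤ) - 1 := by
  have h := choose_modeq p j hj
  have h1 : 1 ≤ (p + j).choose j := Nat.choose_pos (by omega)
  have h2 : p ∣ (p + j).choose j - 1 := (Nat.modEq_iff_dvd' h1).mp h.symm
  obtain ⟨k, hk⟩ := h2
  zify [h1] at hk
  exact ⟨k, hk⟩

end Arith

section Main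
open Finset Pointwise MvPolynomial

theorem eje_p_sub_e_pj_in_image_transfer (p : ℕ) [Fact p.Prime] (i : ℕ)
    (hi1 : 1 ≤ i) (hi2 : i ≤ p - 1) (j : ℕ) (hj1 : 1 ≤ j) (hj2 : j ≤ i) :
    (∃ f : MvPolynomial (Fin (p + i)) (Zp p),
        ∑ σ : Equiv.Perm (Fin (p + i)), rename (⇑σ) f =
          esymm (Fin (p + i)) (Zp p) j * esymm (Fin (p + i)) (Zp p) p -
            esymm (Fin (p + i)) (Zp p) (p + j)) ∧
    (coeff
        ((Finset.univ.filter (fun t : Fin (p + i) => (t : ℕ) < p + j)).sum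
          (fun t => Finsupp.single t 1))
        (esymm (Fin (p + i)) (Zp p) j * esymm (Fin (p + i)) (Zp p) p -
          esymm (Fin (p + i)) (Zp p) (p + j)) =
      (((p + j).choose j : ℕ) : Zp p) - 1) ∧
    ((((p + j).factorial * (i - j).factorial : ℕ) : Zp p) ∣
      ((((p + j).choose j : ℕ) : Zp p) - 1)) := by
  classical
  have hp : p.Prime := Fact.out
  have h2p : 2 ≤ p := hp.two_le
  have hip : i < p := by omega
  have hjp : j < p := by omega
  set P := (Finset.powersetCard j (Finset.univ : Finset (Fin (p + i))) ×ˢ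
      Finset.powersetCard p (Finset.univ : Finset (Fin (p + i)))) with hPdef
  set P₁ := P.filter (fun x : Finset (Fin (p + i)) × Finset (Fin (p + i)) =>
    (x.1 ∩ x.2).Nonempty) with hP₁def
  -- step 1 : expansion of the product
  have hstep1 : esymm (Fin (p + i)) (Zp p) j * esymm (Fin (p + i)) (Zp p) p
      = ∑ x ∈ P, mS (Zp p) x.1 * mS (Zp p) x.2 := by
    rw [esymm_eq_sum_mS, esymm_eq_sum_mS, Finset.sum_mul_sum, hPdef, Finset.sum_product]
  -- key decomposition
  have hkey : esymm (Fin (p + i)) (Zp p) j * esymm (Fin (p + i)) (Zp p) p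
      = (∑ x ∈ P₁, mS (Zp p) x.1 * mS (Zp p) x.2)
        + (p + j).choose j • esymm (Fin (p + i)) (Zp p) (p + j) := by
    rw [hstep1, ← Finset.sum_filter_add_sum_filter_not P
      (fun x : Finset (Fin (p + i)) × Finset (Fin (p + i)) => (x.1 ∩ x.2).Nonempty)]
    congr 1
    rw [sum_disjoint_pairs (Zp p) j p, Nat.add_comm j p, ← esymm_eq_sum_mS]
  -- membership facts for pairs in P₁
  have hP₁mem : ∀ x ∈ P₁, x.1.card = j ∧ x.2.card = p ∧ (x.1 ∩ x.2).Nonempty := by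
    intro x hx
    rw [hP₁def, Finset.mem_filter, hPdef, Finset.mem_product,
      Finset.mem_powersetCard_univ, Finset.mem_powersetCard_univ] at hx
    exact ⟨hx.1.1, hx.1.2, hx.2⟩
  -- orbit decomposition of P₁
  have hP₁inv : ∀ (σ : Equiv.Perm (Fin (p + i))), ∀ x ∈ P₁, σ • x ∈ P₁ := by
    intro σ x hx
    obtain ⟨h1, h2, h3⟩ := hP₁mem x hx
    rw [hP₁def, Finset.mem_filter, hPdef, Finset.mem_product,
      Finset.mem_powersetCard_univ, Finset.mem_powersetCard_univ]
    refine ⟨⟨?_, ?_⟩, ?_⟩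
    · rw [show (σ • x).1 = σ • x.1 from rfl, Finset.card_smul_finset]; exact h1
    · rw [show (σ • x).2 = σ • x.2 from rfl, Finset.card_smul_finset]; exact h2
    · rw [show (σ • x).1 = σ • x.1 from rfl, show (σ • x).2 = σ • x.2 from rfl,
        ← Finset.smul_finset_inter]
      exact h3.smul_finset
  obtain ⟨Q₁, hQ₁sub, hQ₁eq⟩ := orbit_decomp P₁ hP₁inv
    (fun x : Finset (Fin (p + i)) × Finset (Fin (p + i)) => mS (Zp p) x.1 * mS (Zp p) x.2)
  -- orbit decomposition of the (p+j)-subsets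
  have hEinv : ∀ (σ : Equiv.Perm (Fin (p + i))),
      ∀ S ∈ Finset.powersetCard (p + j) (Finset.univ : Finset (Fin (p + i))), σ • S ∈
        Finset.powersetCard (p + j) (Finset.univ : Finset (Fin (p + i))) := by
    intro σ S hS
    rw [Finset.mem_powersetCard_univ] at hS ⊢
    rw [Finset.card_smul_finset]
    exact hS
  obtain ⟨Q₂, hQ₂sub, hQ₂eq⟩ := orbit_decomp _ hEinv (mS (Zp p))
  -- stabilizer cards of pairs in Q₁ are units
  have hQ₁unit : ∀ z ∈ Q₁,
      IsUnit (((Finset.univ.filter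
        (fun σ : Equiv.Perm (Fin (p + i)) => σ • z = z)).card : Zp p)) := by
    intro z hz
    obtain ⟨h1, h2, h3⟩ := hP₁mem z (hQ₁sub hz)
    apply isUnit_natCast_Zp p
    obtain ⟨A, B⟩ := z
    exact not_dvd_stab_pair p i j hip hjp h1 h2 h3
  -- choice of cofactors for the subsets in Q₂
  have hwex : ∀ S : Finset (Fin (p + i)), ∃ wS : Zp p, S ∈ Q₂ →
      ((((p + j).choose j : ℕ) : Zp p) - 1) =
        (((Finset.univ.filter
          (fun σ : Equiv.Perm (Fin (p + i)) => σ • S = S)).card : ℕ) : Zp p) * wS := by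
    intro S
    by_cases hS : S ∈ Q₂
    · set d := (Finset.univ.filter
        (fun σ : Equiv.Perm (Fin (p + i)) => σ • S = S)).card with hd
      have hd0 : d ≠ 0 := by
        apply Finset.card_ne_zero_of_mem (a := (1 : Equiv.Perm (Fin (p + i))))
        rw [Finset.mem_filter]
        exact ⟨Finset.mem_univ _, one_smul _ _⟩
      have hdfact : d ∣ (p + i).factorial := by
        rw [hd, ← card_stab_eq]
        have := Subgroup.card_subgroup_dvd_card
          (MulAction.stabilizer (Equiv.Perm (Fin (p + i))) S)
        rwa [Nat.card_eq_fintype_card (α := Equiv.Perm (Fin (p + i))), Fintype.card_perm,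
          Fintype.card_fin] at this
      have hsq : ¬ p ^ 2 ∣ d := by
        intro h
        exact not_sq_dvd_factorial p (by omega : p + i < 2 * p) (h.trans hdfact)
      obtain ⟨wS, hwS⟩ := dvd_cast_Zp p hd0 hsq (p_dvd_choose_sub_one p j hjp)
      refine ⟨wS, fun _ => ?_⟩
      rw [← hwS]
      push_cast
      ring
    · exact ⟨0, fun h => absurd h hS⟩
  choose w hw using hwex
  -- coefficient facts
  have hTcard : (Finset.univ.filter (fun t : Fin (p + i) => (t : ℕ) < p + j)).card = p + j :=
    card_filter_lt p i j hj2
  have hcoeff : coeff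
      (indSum (Finset.univ.filter (fun t : Fin (p + i) => (t : ℕ) < p + j)))
      (esymm (Fin (p + i)) (Zp p) j * esymm (Fin (p + i)) (Zp p) p -
        esymm (Fin (p + i)) (Zp p) (p + j)) =
      (((p + j).choose j : ℕ) : Zp p) - 1 := by
    set T := Finset.univ.filter (fun t : Fin (p + i) => (t : ℕ) < p + j) with hT
    rw [coeff_sub, hkey, coeff_add]
    have c1 : coeff (indSum T) (∑ x ∈ P₁, mS (Zp p) x.1 * mS (Zp p) x.2) = 0 := by
      rw [coeff_sum]
      apply Finset.sum_eq_zero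
      intro x hx
      exact coeff_indSum_mul_eq_zero (Zp p) T (hP₁mem x hx).2.2
    have c3 : coeff (indSum T) (esymm (Fin (p + i)) (Zp p) (p + j)) = 1 := by
      rw [esymm_eq_sum_mS, coeff_sum]
      simp_rw [coeff_indSum_mS]
      rw [Finset.sum_ite_eq' _ T (fun _ => (1 : Zp p)),
        if_pos (Finset.mem_powersetCard_univ.mpr hTcard)]
    rw [c1, c3, ← Nat.cast_smul_eq_nsmul (Zp p), coeff_smul, c3, smul_eq_mul, mul_one, zero_add]
  -- part 3
  have hpart3 : ((((p + j).factorial * (i - j).factorial : ℕ) : Zp p) ∣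
      ((((p + j).choose j : ℕ) : Zp p) - 1)) := by
    have hd0 : (p + j).factorial * (i - j).factorial ≠ 0 := by
      positivity
    have hsq : ¬ p ^ 2 ∣ (p + j).factorial * (i - j).factorial := by
      intro h
      have hpf : ¬ p ∣ (i - j).factorial := by
        rw [Nat.Prime.dvd_factorial hp]
        omega
      have hcop : Nat.Coprime (p ^ 2) ((i - j).factorial) :=
        Nat.Coprime.pow_left 2 ((Nat.Prime.coprime_iff_not_dvd hp).mpr hpf)
      have h2 : p ^ 2 ∣ (p + j).factorial := hcop.dvd_of_dvd_mul_right h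
      exact not_sq_dvd_factorial p (by omega : p + j < 2 * p) h2
    have hdv := dvd_cast_Zp p hd0 hsq (p_dvd_choose_sub_one p j hjp)
    have hcast : ((((p + j).choose j : ℤ) - 1 : ℤ) : Zp p)
        = (((p + j).choose j : ℕ) : Zp p) - 1 := by push_cast; ring
    rwa [hcast] at hdv
  refine ⟨?_, hcoeff, hpart3⟩
  -- part 1 : construction of the transfer preimage
  refine ⟨(∑ z ∈ Q₁, Ring.inverse
      (((Finset.univ.filter
        (fun σ : Equiv.Perm (Fin (p + i)) => σ • z = z)).card : Zp p)) •
        (mS (Zp p) z.1 * mS (Zp p) z.2))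
    + ∑ S ∈ Q₂, w S • mS (Zp p) S, ?_⟩
  simp only [map_add]
  rw [Finset.sum_add_distrib]
  rw [tr_sum Q₁ _ _ (fun σ x => rename_m2 σ x), tr_sum Q₂ _ _ (fun σ S => rename_mS σ S)]
  have hA : ∑ z ∈ Q₁,
      (Ring.inverse (((Finset.univ.filter
        (fun σ : Equiv.Perm (Fin (p + i)) => σ • z = z)).card : Zp p))
        * (((Finset.univ.filter
          (fun σ : Equiv.Perm (Fin (p + i)) => σ • z = z)).card : ℕ) : Zp p))
        • ∑ y ∈ orbF (Equiv.Perm (Fin (p + i))) z, mS (Zp p) y.1 * mS (Zp p) y.2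
      = ∑ x ∈ P₁, mS (Zp p) x.1 * mS (Zp p) x.2 := by
    rw [hQ₁eq]
    refine Finset.sum_congr rfl fun z hz => ?_
    rw [Ring.inverse_mul_cancel _ (hQ₁unit z hz), one_smul]
  have hB : ∑ S ∈ Q₂,
      (w S * (((Finset.univ.filter
        (fun σ : Equiv.Perm (Fin (p + i)) => σ • S = S)).card : ℕ) : Zp p))
        • ∑ y ∈ orbF (Equiv.Perm (Fin (p + i))) S, mS (Zp p) y
      = ((((p + j).choose j : ℕ) : Zp p) - 1) • esymm (Fin (p + i)) (Zp p) (p + j) := by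
    have : ∀ S ∈ Q₂, (w S * (((Finset.univ.filter
        (fun σ : Equiv.Perm (Fin (p + i)) => σ • S = S)).card : ℕ) : Zp p))
        = (((p + j).choose j : ℕ) : Zp p) - 1 := by
      intro S hS
      rw [mul_comm]
      exact (hw S hS).symm
    rw [Finset.sum_congr rfl fun S hS => by rw [this S hS]]
    rw [← Finset.smul_sum, ← hQ₂eq, ← esymm_eq_sum_mS]
  rw [hA, hB, hkey, sub_smul, one_smul, Nat.cast_smul_eq_nsmul]
  abel

end Main
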